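/- Let a, b be points of the open unit ball 𝔹ⁿ ⊂ ℝⁿ and define the Hilbert distance h(a,b) := 2·arcosh((1 − ⟨a,b⟩)/√((1−‖a‖²)(1−‖b‖²))). Then tanh(h(a,b)/4) ≥ ‖a−b‖/√(4 − ‖a+b‖²), with equality when a = −b. -/

import Mathlib

/-- The inverse hyperbolic cosine on the reals. -/
noncomputable def arcosh (x : ℝ) : ℝ := Real.log (x + Real.sqrt (x^2 - 1))

/-- The Hilbert distance of the unit ball `𝔹ⁿ`:
`h(a,b) = 2·arcosh((1−⟨a,b⟩)/√((1−‖a‖²)(1−‖b‖²)))`. -/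
noncomputable def hilbertDist {n : ℕ} (a b : EuclideanSpace ℝ (Fin n)) : ℝ :=
  2 * arcosh ((1 - (inner ℝ a b : ℝ)) / Real.sqrt ((1 - ‖a‖^2) * (1 - ‖b‖^2)))

lemma tanh_half_log {y : ℝ} (hy : 0 < y) :
    Real.tanh (Real.log y / 2) = (y - 1) / (y + 1) := by
  have hE : Real.exp (Real.log y / 2) * Real.exp (Real.log y / 2) = y := by
    rw [← Real.exp_add, show Real.log y / 2 + Real.log y / 2 = Real.log y by ring,
      Real.exp_log hy]
  have hEpos : 0 < Real.exp (Real.log y / 2) := Real.exp_pos _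
  rw [Real.tanh_eq_sinh_div_cosh, Real.sinh_eq, Real.cosh_eq, Real.exp_neg]
  generalize hgen : Real.exp (Real.log y / 2) = E at hE hEpos ⊢
  have hne : E ≠ 0 := ne_of_gt hEpos
  have hy1 : y + 1 ≠ 0 := by positivity
  field_simp
  ring_nf
  nlinarith [hE]

lemma tanh_arcosh_half {x : ℝ} (hx : 1 ≤ x) :
    Real.tanh (arcosh x / 2) = Real.sqrt (x - 1) / Real.sqrt (x + 1) := by
  have h1 : (0:ℝ) ≤ x - 1 := by linarith
  have h2 : (0:ℝ) < x + 1 := by linarith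
  have hs : Real.sqrt (x^2 - 1) = Real.sqrt (x-1) * Real.sqrt (x+1) := by
    rw [show x^2 - 1 = (x-1)*(x+1) by ring, Real.sqrt_mul h1]
  have hsq : Real.sqrt (x^2-1) ≥ 0 := Real.sqrt_nonneg _
  have hy : (0:ℝ) < x + Real.sqrt (x^2-1) := by linarith
  rw [arcosh, tanh_half_log hy]
  have hu : Real.sqrt (x-1) ^ 2 = x - 1 := Real.sq_sqrt h1
  have hv : Real.sqrt (x+1) ^ 2 = x + 1 := Real.sq_sqrt (le_of_lt h2)
  have hvpos : 0 < Real.sqrt (x+1) := Real.sqrt_pos.mpr h2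
  rw [hs, div_eq_div_iff (by nlinarith [Real.sqrt_nonneg (x-1)]) (ne_of_gt hvpos)]
  nlinarith [Real.sqrt_nonneg (x-1)]

lemma tanh_hilbert {n : ℕ} (a b : EuclideanSpace ℝ (Fin n)) (ha : ‖a‖ < 1) (hb : ‖b‖ < 1) :
    Real.tanh (hilbertDist a b / 4) =
      Real.sqrt ((1 - (inner ℝ a b : ℝ) - Real.sqrt ((1 - ‖a‖^2) * (1 - ‖b‖^2))) /
                 (1 - (inner ℝ a b : ℝ) + Real.sqrt ((1 - ‖a‖^2) * (1 - ‖b‖^2)))) := by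
  have hα : ‖a‖^2 < 1 := by nlinarith [norm_nonneg a]
  have hβ : ‖b‖^2 < 1 := by nlinarith [norm_nonneg b]
  set s : ℝ := inner ℝ a b with hsdef
  set D : ℝ := Real.sqrt ((1 - ‖a‖^2) * (1 - ‖b‖^2)) with hDdef
  have hDpos : 0 < D := Real.sqrt_pos.mpr (by nlinarith)
  have hD2 : D^2 = (1 - ‖a‖^2) * (1 - ‖b‖^2) := Real.sq_sqrt (by nlinarith)
  have hst : s ≤ ‖a‖ * ‖b‖ := real_inner_le_norm a b
  have hs1 : s < 1 := lt_of_le_of_lt hst (by nlinarith [norm_nonneg a, norm_nonneg b])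
  have hDle : D ≤ 1 - s := by
    nlinarith [sq_nonneg (‖a‖ - ‖b‖), mul_nonneg (norm_nonneg a) (norm_nonneg b),
      norm_nonneg a, norm_nonneg b]
  have hX1 : 1 ≤ (1 - s) / D := (le_div_iff₀ hDpos).mpr (by linarith)
  have h4 : hilbertDist a b / 4 = arcosh ((1 - s) / D) / 2 := by
    rw [hilbertDist]; ring
  rw [h4, tanh_arcosh_half hX1, ← Real.sqrt_div (by linarith)]
  congr 1
  have hd1 : D ≠ 0 := ne_of_gt hDpos
  have hd2 : 1 - s + D ≠ 0 := by nlinarith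
  field_simp

/-- Corollary 3.6: `tanh(h(a,b)/4) ≥ ‖a−b‖/√(4−‖a+b‖²)` for `a, b` in the unit ball,
with equality when `a = −b`. -/
theorem stmt_8 (n : ℕ) (a b : EuclideanSpace ℝ (Fin n)) (ha : ‖a‖ < 1) (hb : ‖b‖ < 1) :
    ‖a - b‖ / Real.sqrt (4 - ‖a + b‖^2) ≤ Real.tanh (hilbertDist a b / 4) ∧
      (a = -b → Real.tanh (hilbertDist a b / 4) = ‖a - b‖ / Real.sqrt (4 - ‖a + b‖^2)) := by
  constructor
  · rw [tanh_hilbert a b ha hb]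
    have hα : ‖a‖^2 < 1 := by nlinarith [norm_nonneg a]
    have hβ : ‖b‖^2 < 1 := by nlinarith [norm_nonneg b]
    set s : ℝ := inner ℝ a b with hsdef
    set D : ℝ := Real.sqrt ((1 - ‖a‖^2) * (1 - ‖b‖^2)) with hDdef
    have hDpos : 0 < D := Real.sqrt_pos.mpr (by nlinarith)
    have hD2 : D^2 = (1 - ‖a‖^2) * (1 - ‖b‖^2) := Real.sq_sqrt (by nlinarith)
    have hst : s ≤ ‖a‖ * ‖b‖ := real_inner_le_norm a b
    have hs1 : s < 1 := lt_of_le_of_lt hst (by nlinarith [norm_nonneg a, norm_nonneg b])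
    have hDle : D ≤ 1 - s := by
      nlinarith [sq_nonneg (‖a‖ - ‖b‖), mul_nonneg (norm_nonneg a) (norm_nonneg b),
        norm_nonneg a, norm_nonneg b]
    have hAM : 2 * D ≤ 2 - ‖a‖^2 - ‖b‖^2 := by
      have hu : Real.sqrt (1 - ‖a‖^2) ^ 2 = 1 - ‖a‖^2 := Real.sq_sqrt (by linarith)
      have hv : Real.sqrt (1 - ‖b‖^2) ^ 2 = 1 - ‖b‖^2 := Real.sq_sqrt (by linarith)
      have hm : D = Real.sqrt (1 - ‖a‖^2) * Real.sqrt (1 - ‖b‖^2) :=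
        Real.sqrt_mul (by linarith) _
      nlinarith [sq_nonneg (Real.sqrt (1 - ‖a‖^2) - Real.sqrt (1 - ‖b‖^2))]
    have hnsub : ‖a - b‖^2 = ‖a‖^2 - 2*s + ‖b‖^2 := norm_sub_sq_real a b
    have hnadd : ‖a + b‖^2 = ‖a‖^2 + 2*s + ‖b‖^2 := norm_add_sq_real a b
    have hden : (0:ℝ) < 4 - ‖a + b‖^2 := by nlinarith
    rw [show ‖a - b‖ = Real.sqrt (‖a - b‖^2) from (Real.sqrt_sq (norm_nonneg _)).symm,
      ← Real.sqrt_div (sq_nonneg _)]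
    apply Real.sqrt_le_sqrt
    rw [div_le_div_iff₀ hden (by linarith)]
    rw [hnsub, hnadd]
    nlinarith [mul_nonneg (show (0:ℝ) ≤ 1 - s by linarith)
      (show (0:ℝ) ≤ 2 - ‖a‖^2 - ‖b‖^2 - 2*D by linarith)]
  · intro h
    subst h
    rw [tanh_hilbert (-b) b (by simpa using hb) hb]
    have hβ : ‖b‖^2 < 1 := by nlinarith [norm_nonneg b]
    have h1 : (inner ℝ (-b) b : ℝ) = -‖b‖^2 := by
      rw [inner_neg_left, real_inner_self_eq_norm_sq]
    have h2 : ‖(-b : EuclideanSpace ℝ (Fin n))‖ = ‖b‖ := norm_neg b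
    have h3 : (-b : EuclideanSpace ℝ (Fin n)) + b = 0 := by abel
    have h4 : (-b : EuclideanSpace ℝ (Fin n)) - b = -((2:ℝ) • b) := by
      rw [two_smul]; abel
    have h5 : ‖(-b : EuclideanSpace ℝ (Fin n)) - b‖ = 2 * ‖b‖ := by
      rw [h4, norm_neg, norm_smul]; simp
    rw [h1, h2, h3, h5]
    have hD : Real.sqrt ((1 - ‖b‖^2) * (1 - ‖b‖^2)) = 1 - ‖b‖^2 := by
      rw [← pow_two, Real.sqrt_sq (by linarith)]
    rw [hD]
    have : (1 - -‖b‖^2 - (1 - ‖b‖^2)) / (1 - -‖b‖^2 + (1 - ‖b‖^2)) = ‖b‖^2 := by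
      field_simp; ring
    rw [this, Real.sqrt_sq (norm_nonneg b)]
    simp only [norm_zero]
    rw [show (4:ℝ) - 0^2 = 2^2 by norm_num, Real.sqrt_sq (by norm_num)]
    ring
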